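/- The number cos(π/α) is a nonzero rational number if and only if α = 1 or α = 3 (for natural numbers α ≥ 1). -/

import Mathlib

noncomputable def SS : ℕ → Polynomial ℤ
  | 0 => 2
  | 1 => Polynomial.X
  | (n+2) => Polynomial.X * SS (n+1) - SS n

lemma SS_eval (θ : ℝ) : ∀ n : ℕ,
    Polynomial.aeval (2 * Real.cos θ) (SS n) = 2 * Real.cos (n * θ) := by
  intro n
  induction n using Nat.strong_induction_on with
  | _ n ih =>
    match n with
    | 0 => simp [SS, map_ofNat]
    | 1 => simp [SS]
    | (n+2) =>
      have h1 := ih (n+1) (by omega)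
      have h0 := ih n (by omega)
      have ca := Real.cos_add ((n+1) * θ) θ
      have cs := Real.cos_sub ((n+1) * θ) θ
      have e1 : ((n:ℝ)+1) * θ + θ = ((n:ℝ)+2) * θ := by ring
      have e2 : ((n:ℝ)+1) * θ - θ = (n:ℝ) * θ := by ring
      rw [e1] at ca
      rw [e2] at cs
      simp only [SS, map_sub, map_mul, Polynomial.aeval_X, h1, h0]
      push_cast
      nlinarith [ca, cs]

lemma SS_monic : ∀ n : ℕ, (SS (n+1)).Monic ∧ (SS (n+1)).natDegree = n + 1 := by
  intro n
  induction n using Nat.strong_induction_on with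
  | _ n ih =>
    match n with
    | 0 => constructor <;> simp [SS]
    | 1 =>
      have : SS 2 = Polynomial.X ^ 2 - Polynomial.C 2 := by
        simp [SS]; ring
      rw [this]
      constructor
      · exact Polynomial.monic_X_pow_sub_C 2 (by norm_num)
      · compute_degree!
    | (n+2) =>
      obtain ⟨m1, d1⟩ := ih (n+1) (by omega)
      obtain ⟨m0, d0⟩ := ih n (by omega)
      have hX : (Polynomial.X * SS (n+2)).Monic := (Polynomial.monic_X).mul m1
      have hdeg : (Polynomial.X * SS (n+2)).natDegree = n + 3 := by
        rw [Polynomial.natDegree_mul Polynomial.X_ne_zero m1.ne_zero,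
          Polynomial.natDegree_X, d1]
        omega
      constructor
      · show (Polynomial.X * SS (n+2) - SS (n+1)).Monic
        apply hX.sub_of_left
        rw [Polynomial.degree_eq_natDegree m0.ne_zero,
          Polynomial.degree_eq_natDegree hX.ne_zero, hdeg, d0]
        exact_mod_cast by omega
      · show (Polynomial.X * SS (n+2) - SS (n+1)).natDegree = n + 3
        rw [Polynomial.natDegree_sub_eq_left_of_natDegree_lt (by rw [hdeg, d0]; omega), hdeg]

theorem cos_pi_div_rational_nonzero_iff (α : ℕ) (hα : 1 ≤ α) :
    (∃ q : ℚ, (q : ℝ) = Real.cos (Real.pi / α) ∧ q ≠ 0) ↔ α = 1 ∨ α = 3 := by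
  have hα0 : (α : ℝ) ≠ 0 := Nat.cast_ne_zero.mpr (by omega)
  have hαpos : (0:ℝ) < α := by positivity
  constructor
  · rintro ⟨q, hq, hq0⟩
    set θ := Real.pi / α with hθ
    have hαθ : (α : ℝ) * θ = Real.pi := by rw [hθ]; field_simp
    obtain ⟨m, hm⟩ := (SS_monic (α - 1))
    have hα' : α - 1 + 1 = α := by omega
    rw [hα'] at m hm
    set P := SS α + Polynomial.C 2 with hP
    have hR : Polynomial.aeval (((2 * q : ℚ)) : ℝ) P = 0 := by
      push_cast
      rw [hq, hP]
      simp only [map_add, Polynomial.aeval_C, SS_eval θ α, hαθ]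
      simp
    have hint : IsIntegral ℤ ((2 * q : ℚ)) := by
      refine ⟨P, ?_, ?_⟩
      · apply m.add_of_left
        rw [Polynomial.degree_eq_natDegree m.ne_zero, hm]
        exact Polynomial.degree_C_le.trans_lt (by exact_mod_cast by omega)
      · show Polynomial.aeval ((2 * q : ℚ)) P = 0
        have h := Polynomial.aeval_algHom_apply ((algebraMap ℚ ℝ).toIntAlgHom) (2 * q) P
        simp only [RingHom.toIntAlgHom_apply] at h
        have h2 : (algebraMap ℚ ℝ) (Polynomial.aeval (2 * q) P) = 0 := by
          rw [← h]; exact_mod_cast hR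
        exact (map_eq_zero_iff _ (algebraMap ℚ ℝ).injective).mp h2
    obtain ⟨n, hn⟩ := IsIntegrallyClosed.isIntegral_iff.mp hint
    have hn2 : (n : ℚ) = 2 * q := by rw [← hn]; simp
    have hn' : (n : ℝ) = 2 * Real.cos θ := by
      have : ((n : ℚ) : ℝ) = ((2 * q : ℚ) : ℝ) := by exact_mod_cast hn2
      push_cast at this
      rw [hq] at this
      exact this
    have hb1 : Real.cos θ ≤ 1 := Real.cos_le_one θ
    have hb2 : -1 ≤ Real.cos θ := Real.neg_one_le_cos θ
    have hnb1 : -2 ≤ n := by exact_mod_cast show (-2:ℝ) ≤ (n:ℝ) by nlinarith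
    have hnb2 : n ≤ 2 := by exact_mod_cast show (n:ℝ) ≤ 2 by nlinarith
    have hθ0 : 0 ≤ θ := by positivity
    have hθπ : θ ≤ Real.pi := by
      rw [hθ, div_le_iff₀ hαpos]
      nlinarith [Real.pi_pos, show (1:ℝ) ≤ (α:ℝ) from by exact_mod_cast hα]
    have hqne : Real.cos θ ≠ 0 := by
      rw [← hq]; exact_mod_cast hq0
    interval_cases n <;> norm_num at hn'
    · -- n = -2 : cos θ = -1, θ = π, α = 1
      left
      have hc : Real.cos θ = Real.cos Real.pi := by rw [Real.cos_pi]; linarith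
      have hθeq : θ = Real.pi :=
        Real.injOn_cos ⟨hθ0, hθπ⟩ ⟨Real.pi_pos.le, le_refl _⟩ hc
      rw [hθ, div_eq_iff hα0] at hθeq
      have : Real.pi * 1 = Real.pi * (α:ℝ) := by linarith
      have := mul_left_cancel₀ Real.pi_ne_zero this
      exact_mod_cast this.symm
    · -- n = -1 : cos θ = -1/2 = cos(2π/3), 2α = 3 absurd
      exfalso
      have hval : Real.cos (2 * Real.pi / 3) = -(1/2) := by
        rw [show 2 * Real.pi / 3 = Real.pi - Real.pi / 3 by ring, Real.cos_pi_sub,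
          Real.cos_pi_div_three]
      have hc : Real.cos θ = Real.cos (2 * Real.pi / 3) := by rw [hval]; linarith
      have hθeq : θ = 2 * Real.pi / 3 := Real.injOn_cos ⟨hθ0, hθπ⟩
        ⟨by positivity, by nlinarith [Real.pi_pos]⟩ hc
      rw [hθ, div_eq_div_iff hα0 (by norm_num : (3:ℝ) ≠ 0)] at hθeq
      have h3 : Real.pi * 3 = Real.pi * (2 * (α:ℝ)) := by linarith
      have := mul_left_cancel₀ Real.pi_ne_zero h3
      have : (3:ℕ) = 2 * α := by exact_mod_cast this
      omega
    · exact absurd (by linarith : Real.cos θ = 0) hqne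
    · -- n = 1 : cos θ = 1/2, θ = π/3, α = 3
      right
      have hc : Real.cos θ = Real.cos (Real.pi / 3) := by
        rw [Real.cos_pi_div_three]; linarith
      have hθeq : θ = Real.pi / 3 := Real.injOn_cos ⟨hθ0, hθπ⟩
        ⟨by positivity, by nlinarith [Real.pi_pos]⟩ hc
      rw [hθ, div_eq_div_iff hα0 (by norm_num : (3:ℝ) ≠ 0)] at hθeq
      have : Real.pi * 3 = Real.pi * (α:ℝ) := by linarith
      have := mul_left_cancel₀ Real.pi_ne_zero this
      exact_mod_cast this.symm
    · -- n = 2 : cos θ = 1 = cos 0, θ = 0 absurd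
      exfalso
      have hc : Real.cos θ = Real.cos 0 := by rw [Real.cos_zero]; linarith
      have hθeq : θ = 0 := Real.injOn_cos ⟨hθ0, hθπ⟩ ⟨le_refl 0, Real.pi_pos.le⟩ hc
      rw [hθ, div_eq_zero_iff] at hθeq
      rcases hθeq with h | h
      · exact Real.pi_ne_zero h
      · exact hα0 h
  · rintro (rfl | rfl)
    · exact ⟨-1, by simp [Real.cos_pi], by norm_num⟩
    · exact ⟨1/2, by rw [show ((3:ℕ):ℝ) = 3 by norm_num, Real.cos_pi_div_three]; norm_num, by norm_num⟩
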